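/- For all natural numbers m, n, every positive integer N, and every t ∈ [0, 1/(N·2ⁿ + 2)], one has g₁^[m]( 2ⁿ·t / (−(2^{m+1} − 2^{n+1} + N·2^{m+n})·t + 2^m) ) = g₂^[N](g₁^[n](t)). (Equivalently, the element g₁^{−m} g₂^{N} g₁^{n} acts on [0, 1/(N·2ⁿ+2)] by t ↦ 2ⁿ t / (−(2^{m+1} − 2^{n+1} + N·2^{m+n})t + 2^m).) -/

import Mathlib

/-- The element `g₁` of the Lodha–Moore group as a piecewise fractional linear map. -/
noncomputable def g₁ (t : ℝ) : ℝ :=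
  if t ≤ 0 then t
  else if t ≤ 1 / 2 then 2 * t / (2 * t + 1)
  else if t ≤ 1 then 1 / (3 - 2 * t)
  else t

/-- The element `g₂` of the Lodha–Moore group as a piecewise fractional linear map. -/
noncomputable def g₂ (t : ℝ) : ℝ :=
  if t ≤ 0 then t
  else if t ≤ 1 / 3 then t / (1 - t)
  else if t ≤ 1 / 2 then (4 * t - 1) / (5 * t - 1)
  else if t ≤ 1 then 1 / (2 - t)
  else t

lemma two_le_pow (k : ℕ) : (2 : ℝ) ≤ 2 ^ (k + 1) := by
  calc (2:ℝ) = 2 ^ 1 := by norm_num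
  _ ≤ 2 ^ (k + 1) := by
      apply pow_le_pow_right₀ (by norm_num)
      omega

lemma one_le_pow2 (k : ℕ) : (1 : ℝ) ≤ 2 ^ k := by
  calc (1:ℝ) = 2 ^ 0 := by norm_num
  _ ≤ 2 ^ k := pow_le_pow_right₀ (by norm_num) (Nat.zero_le k)

lemma g1_eval {t : ℝ} (h0 : 0 ≤ t) (h1 : t ≤ 1/2) : g₁ t = 2*t/(2*t+1) := by
  unfold g₁
  rcases eq_or_lt_of_le h0 with h|h
  · rw [← h]; norm_num
  · rw [if_neg (by linarith), if_pos h1]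

lemma g2_eval {t : ℝ} (h0 : 0 ≤ t) (h1 : t ≤ 1/3) : g₂ t = t/(1-t) := by
  unfold g₂
  rcases eq_or_lt_of_le h0 with h|h
  · rw [← h]; norm_num
  · rw [if_neg (by linarith), if_pos h1]

lemma g1_zero : g₁ 0 = 0 := by simp [g₁]

lemma g2_zero : g₂ 0 = 0 := by simp [g₂]

lemma g1_iter (n : ℕ) {t : ℝ} (h0 : 0 ≤ t) (h1 : t ≤ 1/2) :
    g₁^[n] t = 2 ^ n * t / ((2 ^ (n+1) - 2) * t + 1) := by
  induction n with
  | zero => norm_num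
  | succ n ih =>
    have h2 := two_le_pow n
    have hd : (0:ℝ) < (2 ^ (n+1) - 2) * t + 1 := by nlinarith
    have hx0 : 0 ≤ 2 ^ n * t / ((2 ^ (n+1) - 2) * t + 1) :=
      div_nonneg (by positivity) hd.le
    have hx1 : 2 ^ n * t / ((2 ^ (n+1) - 2) * t + 1) ≤ 1/2 := by
      rw [div_le_iff₀ hd]
      have h2n1 : (2:ℝ)^(n+1) = 2 * 2^n := by ring
      nlinarith [one_le_pow2 n]
    rw [Function.iterate_succ_apply', ih, g1_eval hx0 hx1]
    have hX : (0:ℝ) < 2 * (2 ^ n * t / ((2 ^ (n+1) - 2) * t + 1)) + 1 := by linarith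
    rw [div_eq_div_iff hX.ne' (by nlinarith [two_le_pow (n+1)] :
      ((2:ℝ) ^ (n+1+1) - 2) * t + 1 ≠ 0)]
    have hd' : t * ((2:ℝ) ^ (n+1) - 2) + 1 ≠ 0 := by nlinarith
    field_simp
    ring

lemma div_one_sub_mul {P Q c : ℝ} (hQ : Q ≠ 0) (h : Q - c * P ≠ 0) :
    (P / Q) / (1 - c * (P / Q)) = P / (Q - c * P) := by
  rw [div_eq_div_iff _ h]
  · field_simp
  · intro hz
    apply h
    have : (1 : ℝ) - c * (P / Q) = 0 := hz
    field_simp at this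
    linarith [this]

lemma g2_iter (N : ℕ) {t : ℝ} (h0 : 0 ≤ t) (h1 : ((N:ℝ) + 2) * t ≤ 1) :
    g₂^[N] t = t / (1 - N * t) := by
  induction N with
  | zero => norm_num
  | succ N ih =>
    have hN0 : (0:ℝ) ≤ N := Nat.cast_nonneg N
    have hcast : ((N+1 : ℕ) : ℝ) = (N:ℝ) + 1 := by push_cast; ring
    rw [hcast] at h1 ⊢
    have h1' : ((N:ℝ) + 2) * t ≤ 1 := by nlinarith
    have hd : (0:ℝ) < 1 - N * t := by nlinarith
    have hd2 : (0:ℝ) < 1 - ((N:ℝ) + 1) * t := by nlinarith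
    have hx0 : 0 ≤ t / (1 - N * t) := div_nonneg h0 hd.le
    have hx1 : t / (1 - N * t) ≤ 1/3 := by
      rw [div_le_iff₀ hd]; nlinarith
    have hX : t / (1 - N * t) < 1 := by
      rw [div_lt_one hd]; nlinarith
    rw [Function.iterate_succ_apply', ih h1', g2_eval hx0 hx1]
    have key := div_one_sub_mul (P := t) (Q := 1 - (N:ℝ)*t) (c := 1) hd.ne'
      (by intro hz; apply hd2.ne'; linarith)
    rw [one_mul] at key
    rw [key]
    congr 1
    ring

lemma g1_iter_frac (m : ℕ) {P Q : ℝ} (hP : 0 ≤ P) (hQ : 0 < Q) (h : 2 * P ≤ Q) :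
    g₁^[m] (P / Q) = 2 ^ m * P / ((2 ^ (m+1) - 2) * P + Q) := by
  have hu0 : 0 ≤ P / Q := div_nonneg hP hQ.le
  have hu1 : P / Q ≤ 1 / 2 := by
    rw [div_le_div_iff₀ hQ (by norm_num)]; linarith
  rw [g1_iter m hu0 hu1]
  have h2 := two_le_pow m
  have hnn : (0:ℝ) ≤ 2 ^ (m+1) - 2 := by linarith
  have hd1 : (0:ℝ) < (2 ^ (m+1) - 2) * (P / Q) + 1 := by
    nlinarith [mul_nonneg hnn hu0]
  have hd2 : (0:ℝ) < (2 ^ (m+1) - 2) * P + Q := by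
    nlinarith [mul_nonneg hnn hP]
  rw [div_eq_div_iff hd1.ne' hd2.ne']
  field_simp

set_option maxHeartbeats 1000000

/-- The element `g₁⁻ᵐ g₂ᴺ g₁ⁿ` acts on `[0, 1/(N·2ⁿ + 2)]` by
`t ↦ 2ⁿ t / (−(2^(m+1) − 2^(n+1) + N·2^(m+n))t + 2^m)`. -/
theorem normal_form_action₁ (m n : ℕ) (N : ℕ) (hN : 0 < N) (t : ℝ)
    (ht : t ∈ Set.Icc (0 : ℝ) (1 / ((N : ℝ) * 2 ^ n + 2))) :
    g₁^[m] (2 ^ n * t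
        / (-((2 : ℝ) ^ (m + 1) - 2 ^ (n + 1) + (N : ℝ) * 2 ^ (m + n)) * t + 2 ^ m))
      = g₂^[N] (g₁^[n] t) := by
  obtain ⟨h0, h1⟩ := ht
  rcases h0.eq_or_lt with rfl|h0p
  · simp [Function.iterate_fixed g1_zero, Function.iterate_fixed g2_zero]
  have hN1 : (1:ℝ) ≤ N := by exact_mod_cast hN
  have hpn := one_le_pow2 n
  have hpm := one_le_pow2 m
  have hden : (0:ℝ) < (N:ℝ) * 2 ^ n + 2 := by nlinarith
  have ht2 : ((N:ℝ) * 2 ^ n + 2) * t ≤ 1 := by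
    have := (le_div_iff₀ hden).1 h1; linarith
  have h2m1 : (2:ℝ)^(m+1) = 2 * 2^m := by ring
  have h2n1 : (2:ℝ)^(n+1) = 2 * 2^n := by ring
  have h2mn : (2:ℝ)^(m+n) = 2^m * 2^n := by rw [pow_add]
  -- Right-hand side
  have ht12 : t ≤ 1/2 := by nlinarith
  have hsd : (0:ℝ) < (2 ^ (n+1) - 2) * t + 1 := by
    nlinarith [two_le_pow n]
  have hs := g1_iter n h0 ht12
  set s : ℝ := 2 ^ n * t / ((2 ^ (n+1) - 2) * t + 1) with hs_def
  have hs0 : 0 < s := div_pos (by positivity) hsd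
  have hs1 : ((N:ℝ) + 2) * s ≤ 1 := by
    rw [hs_def, ← mul_div_assoc, div_le_one hsd]
    nlinarith
  have hEd : (0:ℝ) < (2 ^ (n+1) - 2 - (N:ℝ) * 2 ^ n) * t + 1 := by
    nlinarith [mul_pos (by positivity : (0:ℝ) < (2:ℝ)^n) h0p]
  have hrhs : g₂^[N] (g₁^[n] t)
      = 2 ^ n * t / ((2 ^ (n+1) - 2 - (N:ℝ) * 2 ^ n) * t + 1) := by
    rw [hs, g2_iter N hs0.le hs1, hs_def,
      div_one_sub_mul hsd.ne' (by nlinarith : ((2:ℝ) ^ (n+1) - 2) * t + 1 - (N:ℝ) * (2 ^ n * t) ≠ 0)]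
    congr 1
    ring
  -- Left-hand side
  have hc : (0:ℝ) < -((2 : ℝ) ^ (m + 1) - 2 ^ (n + 1) + (N : ℝ) * 2 ^ (m + n)) * t + 2 ^ m := by
    nlinarith [mul_nonneg (by positivity : (0:ℝ) ≤ (2:ℝ)^m)
        (by linarith : (0:ℝ) ≤ 1 - ((N:ℝ) * 2 ^ n + 2) * t),
      mul_pos (by positivity : (0:ℝ) < (2:ℝ)^n) h0p]
  set D : ℝ := -((2 : ℝ) ^ (m + 1) - 2 ^ (n + 1) + (N : ℝ) * 2 ^ (m + n)) * t + 2 ^ m with hD_def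
  have h2P : 2 * (2 ^ n * t) ≤ D := by
    rw [hD_def]
    nlinarith [mul_nonneg (by positivity : (0:ℝ) ≤ (2:ℝ)^m)
      (by linarith : (0:ℝ) ≤ 1 - ((N:ℝ) * 2 ^ n + 2) * t)]
  rw [g1_iter_frac m (by positivity) hc h2P, hrhs]
  have hnn : (0:ℝ) ≤ 2 ^ (m+1) - 2 := by linarith [two_le_pow m]
  have hd2 : (0:ℝ) < (2 ^ (m+1) - 2) * (2 ^ n * t) + D := by
    nlinarith [mul_nonneg hnn (by positivity : (0:ℝ) ≤ (2:ℝ)^n * t)]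
  rw [div_eq_div_iff hd2.ne' hEd.ne', hD_def]
  ring
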